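/- Every inner divisor of B_λ := b_λ I_n ∈ H^∞_{M_n}, where b_λ is a single Blaschke factor, is a Blaschke–Potapov factor, i.e., of the form ν(b_λ P + (I − P)) for an orthogonal projection P on ℂⁿ and a constant unitary ν. -/

import Mathlib

open MeasureTheory Complex Real InnerProductSpace Submodule

set_option maxHeartbeats 1000000
set_option synthInstance.maxHeartbeats 200000

noncomputable section

namespace BlockToeplitz

instance fact2pi : Fact (0 < 2 * π) := ⟨by positivity⟩

/-- The unit circle, as the additive circle `ℝ / 2πℤ`. -/
abbrev 𝕋 : Type := AddCircle (2 * π)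

/-- Normalized Haar (Lebesgue) measure on the circle. -/
abbrev μ𝕋 : Measure 𝕋 := AddCircle.haarAddCircle

section Pointwise

variable {E F : Type*} [NormedAddCommGroup E] [NormedSpace ℂ E]
  [NormedAddCommGroup F] [NormedSpace ℂ F]

theorem memLp_pointwise {Φ : 𝕋 → (E →L[ℂ] F)} (hm : AEStronglyMeasurable Φ μ𝕋)
    {C : ℝ} (hC : ∀ x, ‖Φ x‖ ≤ C) (f : Lp E 2 μ𝕋) :
    MemLp (fun x => Φ x (f x)) 2 μ𝕋 := by
  refine MemLp.of_le_mul (c := C) (Lp.memLp f) ?_ ?_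
  · exact isBoundedBilinearMap_apply.continuous.comp_aestronglyMeasurable
      (hm.prodMk (Lp.aestronglyMeasurable f))
  · refine Filter.Eventually.of_forall fun x => ?_
    exact (ContinuousLinearMap.le_opNorm _ _).trans
      (mul_le_mul_of_nonneg_right (hC x) (norm_nonneg _))

/-- The operator on `L²` of pointwise application of a uniformly bounded family of
operators (e.g. multiplication by an `L^∞` matrix function). -/
def pointwiseCLM (Φ : 𝕋 → (E →L[ℂ] F)) (hm : AEStronglyMeasurable Φ μ𝕋)
    {C : ℝ} (hC : ∀ x, ‖Φ x‖ ≤ C) : Lp E 2 μ𝕋 →L[ℂ] Lp F 2 μ𝕋 :=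
  LinearMap.mkContinuous
    { toFun := fun f => (memLp_pointwise hm hC f).toLp _
      map_add' := fun f g => by
        rw [← MemLp.toLp_add (memLp_pointwise hm hC f) (memLp_pointwise hm hC g)]
        refine MemLp.toLp_congr _ _ ?_
        filter_upwards [Lp.coeFn_add f g] with x hx
        simp only [hx, Pi.add_apply, map_add]
      map_smul' := fun c f => by
        try dsimp only
        rw [RingHom.id_apply, ← MemLp.toLp_const_smul c (memLp_pointwise hm hC f)]
        refine MemLp.toLp_congr _ _ ?_
        filter_upwards [Lp.coeFn_smul c f] with x hx
        simp only [hx, Pi.smul_apply, ContinuousLinearMap.map_smul] }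
    (max C 0)
    (by
      intro f
      simp only [LinearMap.coe_mk, AddHom.coe_mk]
      rw [Lp.norm_toLp]
      have hb : eLpNorm (fun x => Φ x (f x)) 2 μ𝕋
          ≤ ENNReal.ofReal (max C 0) * eLpNorm (f : 𝕋 → E) 2 μ𝕋 := by
        refine eLpNorm_le_mul_eLpNorm_of_ae_le_mul ?_ 2
        refine Filter.Eventually.of_forall fun x => ?_
        exact (ContinuousLinearMap.le_opNorm _ _).trans
          (mul_le_mul_of_nonneg_right ((hC x).trans (le_max_left _ _)) (norm_nonneg _))
      calc (eLpNorm (fun x => Φ x (f x)) 2 μ𝕋).toReal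
          ≤ (ENNReal.ofReal (max C 0) * eLpNorm (f : 𝕋 → E) 2 μ𝕋).toReal := by
            refine ENNReal.toReal_mono ?_ hb
            exact ENNReal.mul_ne_top ENNReal.ofReal_ne_top (Lp.eLpNorm_ne_top f)
        _ = max C 0 * ‖f‖ := by
            rw [ENNReal.toReal_mul, ENNReal.toReal_ofReal (le_max_right C 0), Lp.norm_def])

@[simp] theorem pointwiseCLM_apply (Φ : 𝕋 → (E →L[ℂ] F)) (hm : AEStronglyMeasurable Φ μ𝕋)
    {C : ℝ} (hC : ∀ x, ‖Φ x‖ ≤ C) (f : Lp E 2 μ𝕋) :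
    pointwiseCLM Φ hm hC f = (memLp_pointwise hm hC f).toLp _ := rfl

end Pointwise

end BlockToeplitz

namespace BlockToeplitz
open scoped ComplexConjugate

variable {ι : Type} [Fintype ι]

/-- `ℂ^ι`. -/
abbrev V (ι : Type) [Fintype ι] : Type := EuclideanSpace ℂ ι

/-- The space `L²(𝕋, ℂ^ι)`. -/
abbrev L2 (ι : Type) [Fintype ι] : Type := Lp (V ι) 2 μ𝕋

/-- The vector-valued trigonometric monomial `z^k ⊗ e_i` as an element of `L²`. -/
def fourierV (ι : Type) [Fintype ι] [DecidableEq ι] (k : ℤ) (i : ι) : L2 ι :=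
  (ContinuousMap.toLp (E := V ι) 2 μ𝕋 ℂ)
    ⟨fun x => fourier k x • EuclideanSpace.single i 1,
      (map_continuous (fourier k)).smul continuous_const⟩

/-- The span of the analytic-negative monomials. -/
def negSpan (ι : Type) [Fintype ι] : Submodule ℂ (L2 ι) :=
  Submodule.span ℂ
    {f | ∃ k : ℤ, k < 0 ∧ ∃ i : ι, f = @fourierV ι _ (Classical.decEq ι) k i}

/-- The vector-valued Hardy space `H²(𝕋, ℂ^ι)`, i.e. the orthogonal complement in
`L²` of the span of the monomials `z^k ⊗ e_i`, `k < 0`. -/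
def hardy (ι : Type) [Fintype ι] : Submodule ℂ (L2 ι) := (negSpan ι)ᗮ

/-- The Hardy space as a Hilbert space. -/
abbrev H2 (ι : Type) [Fintype ι] : Type := ↥(hardy ι)

instance : CompleteSpace (H2 ι) := by
  unfold H2 hardy; infer_instance

instance : HasOrthogonalProjection (hardy ι) := by
  unfold hardy; infer_instance

/-- The orthogonal projection `P` of `L²` onto `H²`. -/
def hardyProj (ι : Type) [Fintype ι] : L2 ι →L[ℂ] H2 ι :=
  orthogonalProjection (hardy ι)

/-- A matrix-valued `L^∞` function on the circle (the matrices being identified with the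
operators on `ℂ^ι` that they induce): a bounded measurable family of operators. -/
structure Symbol (ι : Type) [Fintype ι] : Type where
  toFun : 𝕋 → (V ι →L[ℂ] V ι)
  meas : AEStronglyMeasurable toFun μ𝕋
  bound : ℝ
  le_bound : ∀ x, ‖toFun x‖ ≤ bound

instance : CoeFun (Symbol ι) (fun _ => 𝕋 → (V ι →L[ℂ] V ι)) := ⟨Symbol.toFun⟩

/-- The multiplication operator `f ↦ Φ f` on `L²(𝕋, ℂ^ι)`. -/
def Symbol.mulLp (Φ : Symbol ι) : L2 ι →L[ℂ] L2 ι :=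
  pointwiseCLM Φ.toFun Φ.meas Φ.le_bound

/-- Pointwise product (composition) of two matrix symbols. -/
def Symbol.mul (Φ Ψ : Symbol ι) : Symbol ι where
  toFun := fun x => (Φ x).comp (Ψ x)
  meas := isBoundedBilinearMap_comp.continuous.comp_aestronglyMeasurable
    (Φ.meas.prodMk Ψ.meas)
  bound := max Φ.bound 0 * max Ψ.bound 0
  le_bound := fun x => (ContinuousLinearMap.opNorm_comp_le _ _).trans <|
    mul_le_mul ((Φ.le_bound x).trans (le_max_left _ _))
      ((Ψ.le_bound x).trans (le_max_left _ _)) (norm_nonneg _) (le_max_right _ _)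

/-- The pointwise adjoint symbol `Φ*` (conjugate transpose). -/
def Symbol.star (Φ : Symbol ι) : Symbol ι where
  toFun := fun x => ContinuousLinearMap.adjoint (Φ x)
  meas := (ContinuousLinearMap.adjoint (𝕜 := ℂ) (E := V ι)
      (F := V ι)).continuous.comp_aestronglyMeasurable Φ.meas
  bound := Φ.bound
  le_bound := fun x =>
    le_trans
      (le_of_eq ((ContinuousLinearMap.adjoint (𝕜 := ℂ) (E := V ι) (F := V ι)).norm_map (Φ.toFun x)))
      (Φ.le_bound x)

end BlockToeplitz

namespace BlockToeplitz
open scoped ComplexConjugate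

theorem norm_fourier_apply (k : ℤ) (x : 𝕋) : ‖fourier k x‖ = 1 := by
  rw [fourier_apply]; exact Circle.norm_coe _

section CompNeg

variable {E : Type*} [NormedAddCommGroup E] [NormedSpace ℂ E]

/-- The composition operator `f(z) ↦ f(z̄)` (i.e. `x ↦ -x` on the additive circle)
on `L²`. -/
def compNeg (E : Type*) [NormedAddCommGroup E] [NormedSpace ℂ E] :
    Lp E 2 μ𝕋 →L[ℂ] Lp E 2 μ𝕋 :=
  LinearMap.mkContinuous
    { toFun := fun f =>
        Lp.compMeasurePreserving (E := E) (p := 2) Neg.neg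
          (Measure.measurePreserving_neg μ𝕋) f
      map_add' := fun f g => by
        exact map_add (Lp.compMeasurePreserving Neg.neg (Measure.measurePreserving_neg μ𝕋)) f g
      map_smul' := fun c f => by
        apply Lp.ext
        have h1 := Lp.coeFn_compMeasurePreserving (μ := μ𝕋) (c • f)
          (Measure.measurePreserving_neg μ𝕋)
        have h2 := Lp.coeFn_compMeasurePreserving (μ := μ𝕋) f
          (Measure.measurePreserving_neg μ𝕋)
        have h3 : ((c • f : Lp E 2 μ𝕋) : 𝕋 → E) ∘ Neg.neg
            =ᵐ[μ𝕋] ((c • (f : 𝕋 → E)) ∘ Neg.neg) :=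
          (Measure.measurePreserving_neg μ𝕋).quasiMeasurePreserving.ae_eq_comp
            (Lp.coeFn_smul c f)
        filter_upwards [h1, h3,
          Lp.coeFn_smul c (Lp.compMeasurePreserving (E := E) (p := 2) Neg.neg
            (Measure.measurePreserving_neg μ𝕋) f), h2]
          with x hx1 hx3 hx4 hx2
        rw [RingHom.id_apply, hx1, hx3, hx4]
        show c • (f : 𝕋 → E) (-x)
            = c • (Lp.compMeasurePreserving (E := E) (p := 2) Neg.neg
                (Measure.measurePreserving_neg μ𝕋) f : 𝕋 → E) x
        rw [hx2]
        rfl }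
    1
    (fun f => by
      simpa using (Lp.norm_compMeasurePreserving (E := E) (p := 2) f
        (Measure.measurePreserving_neg μ𝕋)).le)

/-- The unitary operator `J f (z) = z̄ f(z̄)` on `L²`. -/
def Jop (E : Type*) [NormedAddCommGroup E] [NormedSpace ℂ E] :
    Lp E 2 μ𝕋 →L[ℂ] Lp E 2 μ𝕋 :=
  (pointwiseCLM (fun x => (fourier (-1) x : ℂ) • (1 : E →L[ℂ] E))
      (((map_continuous (fourier (-1))).smul continuous_const).aestronglyMeasurable)
      (C := 1)
      (fun x => by
        show ‖(fourier (-1)) x • (1 : E →L[ℂ] E)‖ ≤ 1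
        rw [norm_smul ((fourier (-1)) x) (1 : E →L[ℂ] E), norm_fourier_apply, one_mul,
          ContinuousLinearMap.one_def]
        exact ContinuousLinearMap.norm_id_le)).comp (compNeg E)

end CompNeg

end BlockToeplitz

namespace BlockToeplitz
open scoped ComplexConjugate

variable {ι : Type} [Fintype ι]

/-- The pointwise transposed-conjugated-reflected symbol `Φ̃(z) := Φ(z̄)*`. -/
def Symbol.tilde (Φ : Symbol ι) : Symbol ι where
  toFun := fun x => ContinuousLinearMap.adjoint (Φ.toFun (-x))
  meas := (ContinuousLinearMap.adjoint (𝕜 := ℂ) (E := V ι)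
      (F := V ι)).continuous.comp_aestronglyMeasurable
    (Φ.meas.comp_quasiMeasurePreserving
      (Measure.measurePreserving_neg μ𝕋).quasiMeasurePreserving)
  bound := Φ.bound
  le_bound := fun x =>
    le_trans
      (le_of_eq
        ((ContinuousLinearMap.adjoint (𝕜 := ℂ) (E := V ι) (F := V ι)).norm_map (Φ.toFun (-x))))
      (Φ.le_bound (-x))

/-- A matrix symbol belongs to `H^∞` iff multiplication by it leaves the Hardy space
invariant. -/
def Symbol.MemHinf (Φ : Symbol ι) : Prop :=
  ∀ f : L2 ι, f ∈ hardy ι → Φ.mulLp f ∈ hardy ι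

/-- A matrix `H^∞` symbol is inner if `Θ(z)*Θ(z) = I` a.e. -/
def Symbol.IsInner (Φ : Symbol ι) : Prop :=
  Φ.MemHinf ∧ ∀ᵐ x ∂μ𝕋, (ContinuousLinearMap.adjoint (Φ.toFun x)).comp (Φ.toFun x) = 1

/-- The block Toeplitz operator `T_Φ = P (Φ ·)` on the vector Hardy space. -/
def toeplitz (Φ : Symbol ι) : H2 ι →L[ℂ] H2 ι :=
  (hardyProj ι).comp (Φ.mulLp.comp (hardy ι).subtypeL)

/-- The block Hankel operator `H_Φ = J P^⊥ (Φ ·)`, viewed as an operator from `H²` to `H²`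
(its image indeed lies in `H²`). -/
def hankel (Φ : Symbol ι) : H2 ι →L[ℂ] H2 ι :=
  (hardyProj ι).comp <|
    (Jop (V ι)).comp <|
      (ContinuousLinearMap.id ℂ (L2 ι) - (hardy ι).subtypeL.comp (hardyProj ι)).comp <|
        Φ.mulLp.comp (hardy ι).subtypeL

/-- The image `Θ · H²` of the Hardy space under multiplication by a symbol. -/
def Symbol.rangeH2 (Φ : Symbol ι) : Submodule ℂ (L2 ι) :=
  (hardy ι).map (Φ.mulLp : L2 ι →ₗ[ℂ] L2 ι)

/-- The model space `H(Θ) := H² ⊖ Θ H²`. -/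
def modelSpace (Θ : Symbol ι) : Submodule ℂ (L2 ι) :=
  hardy ι ⊓ (Θ.rangeH2)ᗮ

/-- A scalar-valued `L^∞` function on the circle. -/
structure SymbolS : Type where
  toFun : 𝕋 → ℂ
  meas : AEStronglyMeasurable toFun μ𝕋
  bound : ℝ
  le_bound : ∀ x, ‖toFun x‖ ≤ bound

instance : CoeFun SymbolS (fun _ => 𝕋 → ℂ) := ⟨SymbolS.toFun⟩

/-- Scalar symbols embed into matrix symbols as `φ I_n`. -/
def SymbolS.toMatrix (φ : SymbolS) (ι : Type) [Fintype ι] : Symbol ι where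
  toFun := fun x => φ.toFun x • (1 : V ι →L[ℂ] V ι)
  meas := φ.meas.smul aestronglyMeasurable_const
  bound := φ.bound
  le_bound := fun x => by
    have h0 : (0 : ℝ) ≤ φ.bound := le_trans (norm_nonneg _) (φ.le_bound 0)
    calc ‖φ.toFun x • (1 : V ι →L[ℂ] V ι)‖ ≤ ‖φ.toFun x‖ * ‖(1 : V ι →L[ℂ] V ι)‖ :=
          ContinuousLinearMap.opNorm_smul_le _ _
      _ ≤ φ.bound * 1 := by
          refine mul_le_mul (φ.le_bound x) ?_ (norm_nonneg _) h0
          rw [ContinuousLinearMap.one_def]; exact ContinuousLinearMap.norm_id_le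
      _ = φ.bound := mul_one _

/-- The scalar-valued `L²` space of the circle. -/
abbrev L2S : Type := Lp ℂ 2 μ𝕋

/-- The span of the negative trigonometric monomials. -/
def negSpanS : Submodule ℂ L2S :=
  Submodule.span ℂ {f | ∃ k : ℤ, k < 0 ∧ f = fourierLp 2 k}

/-- The scalar Hardy space `H²(𝕋)`. -/
def hardyS : Submodule ℂ L2S := negSpanSᗮ

/-- The scalar Hardy space as a Hilbert space. -/
abbrev H2S : Type := ↥hardyS

instance : CompleteSpace H2S := by unfold H2S hardyS; infer_instance

instance : HasOrthogonalProjection hardyS := by unfold hardyS; infer_instance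

/-- The Szegő (Riesz) projection `P : L² → H²`. -/
def hardyProjS : L2S →L[ℂ] H2S := orthogonalProjection hardyS

/-- Multiplication by a scalar `L^∞` function, as an operator on `L²(𝕋)`. -/
def SymbolS.mulLp (φ : SymbolS) : L2S →L[ℂ] L2S :=
  pointwiseCLM (fun x => φ.toFun x • (1 : ℂ →L[ℂ] ℂ))
    (φ.meas.smul aestronglyMeasurable_const)
    (C := φ.bound)
    (fun x => by
      calc ‖φ.toFun x • (1 : ℂ →L[ℂ] ℂ)‖ ≤ ‖φ.toFun x‖ * ‖(1 : ℂ →L[ℂ] ℂ)‖ :=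
            ContinuousLinearMap.opNorm_smul_le _ _
        _ = ‖φ.toFun x‖ := by rw [norm_one, mul_one]
        _ ≤ φ.bound := φ.le_bound x)

/-- The scalar Toeplitz operator `T_φ` on `H²`. -/
def toeplitzS (φ : SymbolS) : H2S →L[ℂ] H2S :=
  hardyProjS.comp (φ.mulLp.comp hardyS.subtypeL)

/-- The scalar Hankel operator `H_φ = J P^⊥ (φ ·)` on `H²`. -/
def hankelS (φ : SymbolS) : H2S →L[ℂ] H2S :=
  hardyProjS.comp <|
    (Jop ℂ).comp <|
      (ContinuousLinearMap.id ℂ L2S - hardyS.subtypeL.comp hardyProjS).comp <|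
        φ.mulLp.comp hardyS.subtypeL

/-- Pointwise product of scalar symbols. -/
def SymbolS.mul (φ ψ : SymbolS) : SymbolS where
  toFun := fun x => φ.toFun x * ψ.toFun x
  meas := φ.meas.mul ψ.meas
  bound := max φ.bound 0 * max ψ.bound 0
  le_bound := fun x => by
    rw [norm_mul]
    exact mul_le_mul ((φ.le_bound x).trans (le_max_left _ _))
      ((ψ.le_bound x).trans (le_max_left _ _)) (norm_nonneg _) (le_max_right _ _)

/-- The complex-conjugate symbol `φ̄`. -/
def SymbolS.conj (φ : SymbolS) : SymbolS where
  toFun := fun x => conj (φ.toFun x)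
  meas := Complex.continuous_conj.comp_aestronglyMeasurable φ.meas
  bound := φ.bound
  le_bound := fun x => le_trans (le_of_eq (RCLike.norm_conj _)) (φ.le_bound x)

/-- The reflected conjugate symbol `φ̃(z) := conj (φ(z̄))`. -/
def SymbolS.tilde (φ : SymbolS) : SymbolS where
  toFun := fun x => conj (φ.toFun (-x))
  meas := Complex.continuous_conj.comp_aestronglyMeasurable
    (φ.meas.comp_quasiMeasurePreserving
      (Measure.measurePreserving_neg μ𝕋).quasiMeasurePreserving)
  bound := φ.bound
  le_bound := fun x => le_trans (le_of_eq (RCLike.norm_conj _)) (φ.le_bound (-x))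

/-- A scalar symbol is in `H^∞` iff multiplication by it preserves `H²`. -/
def SymbolS.MemHinf (φ : SymbolS) : Prop :=
  ∀ f : L2S, f ∈ hardyS → φ.mulLp f ∈ hardyS

/-- A scalar inner function: an `H^∞` function which is unimodular a.e. on the circle. -/
def SymbolS.IsInner (φ : SymbolS) : Prop :=
  φ.MemHinf ∧ ∀ᵐ x ∂μ𝕋, ‖φ.toFun x‖ = 1

/-- The image `θ · H²` of the Hardy space under a scalar multiplication operator. -/
def SymbolS.rangeH2 (φ : SymbolS) : Submodule ℂ L2S :=
  hardyS.map (φ.mulLp : L2S →ₗ[ℂ] L2S)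

/-- The scalar model space `H(θ) = H² ⊖ θH²`. -/
def modelSpaceS (θ : SymbolS) : Submodule ℂ L2S :=
  hardyS ⊓ (θ.rangeH2)ᗮ

/-- The coordinate function `z` on the circle (i.e. `x ↦ e^{ix}`). -/
def circleCoord : 𝕋 → ℂ := fun x => fourier 1 x

/-- The symbol `z` of the unilateral shift. -/
def shiftSymbolS : SymbolS where
  toFun := circleCoord
  meas := (map_continuous (fourier 1)).aestronglyMeasurable
  bound := 1
  le_bound := fun x => le_of_eq (norm_fourier_apply 1 x)

/-- The symbol `z̄`. -/
def coshiftSymbolS : SymbolS where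
  toFun := fun x => fourier (-1) x
  meas := (map_continuous (fourier (-1))).aestronglyMeasurable
  bound := 1
  le_bound := fun x => le_of_eq (norm_fourier_apply (-1) x)

/-- An operator on a complex Hilbert space is hyponormal if its self-commutator
`[T*, T] = T*T - TT*` is a positive operator. -/
def Hyponormal {H : Type*} [NormedAddCommGroup H] [InnerProductSpace ℂ H] [CompleteSpace H]
    (T : H →L[ℂ] H) : Prop :=
  (ContinuousLinearMap.adjoint T ∘L T - T ∘L ContinuousLinearMap.adjoint T).IsPositive

/-- A Blaschke factor `b_a(z) = (z - a)/(1 - āz)`. -/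
def blaschke (a z : ℂ) : ℂ := (z - a) / (1 - conj a * z)

end BlockToeplitz

namespace BlockToeplitz
open scoped ComplexConjugate

theorem fourierCoeff_congr_ae {f g : 𝕋 → ℂ} (h : f =ᵐ[μ𝕋] g) (n : ℤ) :
    fourierCoeff f n = fourierCoeff g n := by
  unfold fourierCoeff
  exact integral_congr_ae (h.mono fun x hx => by simp only []; rw [hx])

theorem integral_fourier (m : ℤ) :
    (∫ x : 𝕋, fourier m x ∂μ𝕋) = if m = 0 then 1 else 0 := by
  split_ifs with h
  · subst h
    have : (fun x : 𝕋 => (fourier 0 x : ℂ)) = fun _ => 1 := by ext x; exact fourier_zero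
    rw [this, integral_const]
    simp
  · exact integral_eq_zero_of_add_right_eq_neg (μ := μ𝕋)
      (fourier_add_half_inv_index h fact2pi.elim)

theorem fourierCoeff_fourier_mul (f : 𝕋 → ℂ) (m n : ℤ) :
    fourierCoeff (fun x => fourier m x * f x) n = fourierCoeff f (n - m) := by
  unfold fourierCoeff
  congr 1
  funext x
  rw [smul_eq_mul, smul_eq_mul, ← mul_assoc, ← fourier_add]
  congr 2
  ring

theorem fourierCoeff_const (c : ℂ) (n : ℤ) :
    fourierCoeff (fun _ : 𝕋 => c) n = if n = 0 then c else 0 := by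
  unfold fourierCoeff
  simp_rw [smul_eq_mul, integral_mul_const, integral_fourier]
  rcases eq_or_ne n 0 with h | h <;> simp [h]

theorem fourierCoeff_conj (f : 𝕋 → ℂ) (n : ℤ) :
    fourierCoeff (fun x => conj (f x)) n = conj (fourierCoeff f (-n)) := by
  unfold fourierCoeff
  rw [← integral_conj]
  congr 1
  funext x
  rw [smul_eq_mul, smul_eq_mul, map_mul]
  congr 1
  rw [← fourier_neg, neg_neg]

theorem memLp2_ae_zero_of_coeffs {f : 𝕋 → ℂ} (hf : MemLp f 2 μ𝕋)
    (h : ∀ n : ℤ, fourierCoeff f n = 0) : f =ᵐ[μ𝕋] 0 := by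
  set F : Lp ℂ 2 μ𝕋 := hf.toLp f with hF
  have hco : ∀ n : ℤ, fourierCoeff (F : 𝕋 → ℂ) n = 0 := fun n => by
    rw [fourierCoeff_congr_ae (hf.coeFn_toLp), h]
  have : F = 0 := by
    apply fourierBasis.repr.injective
    ext n
    rw [fourierBasis_repr, hco, map_zero]
    rfl
  refine (hf.coeFn_toLp.symm).trans ?_
  rw [← hF, this]
  exact Lp.coeFn_zero _ _ _

section Blaschke
variable {lam : ℂ} (hlam : ‖lam‖ < 1)

theorem denom_ne_zero (hlam : ‖lam‖ < 1) {z : ℂ} (hz : ‖z‖ = 1) : 1 - conj lam * z ≠ 0 := by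
  intro h
  have h1 : (1 : ℂ) = conj lam * z := by linear_combination h
  have := congrArg norm h1
  rw [norm_mul, hz, mul_one, norm_one] at this
  rw [RCLike.norm_conj] at this
  exact absurd this.symm (ne_of_lt hlam)

theorem blaschke_mul_denom (hlam : ‖lam‖ < 1) {z : ℂ} (hz : ‖z‖ = 1) :
    blaschke lam z * (1 - conj lam * z) = z - lam :=
  div_mul_cancel₀ _ (denom_ne_zero hlam hz)

theorem norm_blaschke (hlam : ‖lam‖ < 1) {z : ℂ} (hz : ‖z‖ = 1) : ‖blaschke lam z‖ = 1 := by
  have hz0 : z ≠ 0 := by intro h; rw [h, norm_zero] at hz; norm_num at hz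
  have key : ‖z - lam‖ = ‖1 - conj lam * z‖ := by
    have : z - lam = z * conj (1 - conj lam * z) := by
      have hzz : z * conj z = 1 := by
        rw [mul_comm, Complex.conj_mul']
        norm_cast
        rw [hz]; norm_num
      calc z - lam = z * 1 - lam * (z * conj z) := by rw [hzz]; ring
        _ = z * (1 - lam * conj z) := by ring
        _ = z * conj (1 - conj lam * z) := by rw [map_sub, map_one, map_mul, Complex.conj_conj]
    rw [this, norm_mul, hz, one_mul, RCLike.norm_conj]
  rw [blaschke, norm_div, key, div_self]
  intro h0
  exact denom_ne_zero hlam hz (norm_eq_zero.mp h0)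

theorem conj_blaschke_mul (hlam : ‖lam‖ < 1) {z : ℂ} (hz : ‖z‖ = 1) :
    conj (blaschke lam z) * (z - lam) = 1 - conj lam * z := by
  have h1 := blaschke_mul_denom hlam hz
  have h2 : conj (blaschke lam z) * blaschke lam z = 1 := by
    rw [Complex.conj_mul']
    norm_cast
    rw [norm_blaschke hlam hz]
    norm_num
  calc conj (blaschke lam z) * (z - lam)
      = conj (blaschke lam z) * (blaschke lam z * (1 - conj lam * z)) := by rw [h1]
    _ = (conj (blaschke lam z) * blaschke lam z) * (1 - conj lam * z) := by ring
    _ = 1 - conj lam * z := by rw [h2, one_mul]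

theorem blaschke_inj (hlam : ‖lam‖ < 1) {z w : ℂ} (hz : ‖z‖ = 1) (hw : ‖w‖ = 1)
    (h : blaschke lam z = blaschke lam w) : z = w := by
  have h1 : (z - lam) * (1 - conj lam * w) = (w - lam) * (1 - conj lam * z) := by
    rw [blaschke, blaschke, div_eq_div_iff (denom_ne_zero hlam hz) (denom_ne_zero hlam hw)] at h
    exact h
  have h2 : (z - w) * (1 - lam * conj lam) = 0 := by linear_combination h1
  have h3 : (1 : ℂ) - lam * conj lam ≠ 0 := by
    intro h
    have : lam * conj lam = 1 := by linear_combination -h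
    have := congrArg norm this
    rw [norm_mul, RCLike.norm_conj, norm_one] at this
    nlinarith [norm_nonneg lam]
  have := mul_eq_zero.mp h2
  rcases this with h | h
  · linear_combination h
  · exact absurd h h3

end Blaschke

theorem circleCoord_def (x : 𝕋) : circleCoord x = fourier 1 x := rfl

theorem norm_circleCoord (x : 𝕋) : ‖circleCoord x‖ = 1 := norm_fourier_apply 1 x

theorem continuous_circleCoord : Continuous circleCoord := map_continuous (fourier 1)

theorem continuous_bc {lam : ℂ} (hlam : ‖lam‖ < 1) :
    Continuous (fun x : 𝕋 => blaschke lam (circleCoord x)) := by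
  unfold blaschke
  exact ((continuous_circleCoord.sub continuous_const).div
    (continuous_const.sub (continuous_const.mul continuous_circleCoord))
    (fun x => denom_ne_zero hlam (norm_circleCoord x)))

theorem integrable_fourier_smul {f : 𝕋 → ℂ} (hf : Integrable f μ𝕋) (m : ℤ) :
    Integrable (fun x => fourier m x • f x) μ𝕋 := by
  simp_rw [smul_eq_mul]
  exact hf.bdd_mul (map_continuous (fourier m)).aestronglyMeasurable
    (Filter.Eventually.of_forall fun x => (norm_fourier_apply m x).le)

theorem fourierCoeff_sub {f g : 𝕋 → ℂ} (hf : Integrable f μ𝕋) (hg : Integrable g μ𝕋) (n : ℤ) :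
    fourierCoeff (fun x => f x - g x) n = fourierCoeff f n - fourierCoeff g n := by
  unfold fourierCoeff
  rw [← integral_sub (integrable_fourier_smul hf (-n)) (integrable_fourier_smul hg (-n))]
  congr 1
  funext x
  exact smul_sub _ _ _

theorem memLp_mul_bounded {g f : 𝕋 → ℂ} (hg : AEStronglyMeasurable g μ𝕋) {C : ℝ}
    (hC : ∀ x, ‖g x‖ ≤ C) (hf : MemLp f 2 μ𝕋) : MemLp (fun x => g x * f x) 2 μ𝕋 := by
  refine MemLp.of_le_mul (c := C) hf (hg.mul hf.aestronglyMeasurable) ?_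
  refine Filter.Eventually.of_forall fun x => ?_
  rw [norm_mul]
  exact mul_le_mul_of_nonneg_right (hC x) (norm_nonneg _)

theorem integrable_mul_bounded {g f : 𝕋 → ℂ} (hg : AEStronglyMeasurable g μ𝕋) {C : ℝ}
    (hC : ∀ x, ‖g x‖ ≤ C) (hf : Integrable f μ𝕋) : Integrable (fun x => g x * f x) μ𝕋 :=
  hf.bdd_mul hg (Filter.Eventually.of_forall hC)

theorem one_sub_mul_conj_ne {lam : ℂ} (hlam : ‖lam‖ < 1) : (1 : ℂ) - lam * conj lam ≠ 0 := by
  intro h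
  have : lam * conj lam = 1 := by linear_combination -h
  have := congrArg norm this
  rw [norm_mul, RCLike.norm_conj, norm_one] at this
  nlinarith [norm_nonneg lam]

theorem fourierCoeff_fourier' (m k : ℤ) :
    fourierCoeff (⇑(fourier m) : 𝕋 → ℂ) k = if k = m then 1 else 0 := by
  unfold fourierCoeff
  have : ∀ x : 𝕋, fourier (-k) x • fourier m x = fourier (-k + m) x := by
    intro x; rw [smul_eq_mul, ← fourier_add]
  simp_rw [this]
  rw [integral_fourier]
  congr 1
  simp only [eq_iff_iff]
  omega

theorem fourierCoeff_add {f g : 𝕋 → ℂ} (hf : Integrable f μ𝕋) (hg : Integrable g μ𝕋) (n : ℤ) :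
    fourierCoeff (fun x => f x + g x) n = fourierCoeff f n + fourierCoeff g n := by
  unfold fourierCoeff
  rw [← integral_add (integrable_fourier_smul hf (-n)) (integrable_fourier_smul hg (-n))]
  congr 1
  funext x
  exact smul_add _ _ _

theorem scalar_step (lam : ℂ) (hlam : ‖lam‖ < 1) {d : 𝕋 → ℂ} (hd : MemLp d 2 μ𝕋)
    (h1 : ∀ k : ℤ, k < 0 → fourierCoeff d k = 0)
    (h2 : ∀ m : ℤ, 1 ≤ m →
      fourierCoeff (fun x => conj (blaschke lam (circleCoord x)) * d x) m = 0) :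
    ∃ α β : ℂ, ∀ᵐ x ∂μ𝕋, d x = α + β * blaschke lam (circleCoord x) := by
  have hdint : Integrable d μ𝕋 := hd.integrable (by norm_num)
  set b : 𝕋 → ℂ := fun x => blaschke lam (circleCoord x) with hb
  have hbc : Continuous b := continuous_bc hlam
  have hbnorm : ∀ x, ‖b x‖ = 1 := fun x => norm_blaschke hlam (norm_circleCoord x)
  set g : 𝕋 → ℂ := fun x => conj (b x) * d x with hg
  have hgint : Integrable g μ𝕋 :=
    integrable_mul_bounded (Complex.continuous_conj.comp hbc).aestronglyMeasurable
      (C := 1) (fun x => by rw [RCLike.norm_conj]; exact (hbnorm x).le) hdint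
  set e : 𝕋 → ℂ := fun x => (1 - conj lam * circleCoord x) * d x with he
  have heM : MemLp e 2 μ𝕋 :=
    memLp_mul_bounded (g := fun x => 1 - conj lam * circleCoord x) (continuous_const.sub
        (continuous_const.mul continuous_circleCoord)).aestronglyMeasurable
      (C := 1 + ‖lam‖) (fun x => (norm_sub_le _ _).trans (by
        rw [norm_one, norm_mul, RCLike.norm_conj, norm_circleCoord, mul_one])) hd
  have heint : Integrable e μ𝕋 := heM.integrable (by norm_num)
  -- coefficient of e at k, version 1 : a_k - conj lam * a_{k-1}
  have coeff_e : ∀ k : ℤ, fourierCoeff e k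
      = fourierCoeff d k - conj lam * fourierCoeff d (k - 1) := by
    intro k
    have : e = fun x => d x - conj lam * (fourier 1 x * d x) := by
      funext x; simp only [he, circleCoord_def]; ring
    rw [this, fourierCoeff_sub hdint (by
        exact integrable_mul_bounded continuous_const.aestronglyMeasurable
          (C := ‖conj lam‖) (fun x => le_rfl)
          (integrable_mul_bounded (map_continuous (fourier 1)).aestronglyMeasurable
            (C := 1) (fun x => (norm_fourier_apply 1 x).le) hdint)),
      fourierCoeff.const_mul, fourierCoeff_fourier_mul]
  -- coefficient of e at k, version 2, via g
  have coeff_e' : ∀ k : ℤ, fourierCoeff e k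
      = fourierCoeff g (k - 1) - lam * fourierCoeff g k := by
    intro k
    have : e = fun x => fourier 1 x * g x - lam * g x := by
      funext x
      have key := conj_blaschke_mul hlam (norm_circleCoord x)
      simp only [he, hg, hb, circleCoord_def] at *
      calc (1 - conj lam * fourier 1 x) * d x
          = (conj (blaschke lam (fourier 1 x)) * (fourier 1 x - lam)) * d x := by rw [key]
        _ = fourier 1 x * (conj (blaschke lam (fourier 1 x)) * d x)
            - lam * (conj (blaschke lam (fourier 1 x)) * d x) := by ring
    rw [this, fourierCoeff_sub (integrable_mul_bounded
        (map_continuous (fourier 1)).aestronglyMeasurable (C := 1)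
        (fun x => (norm_fourier_apply 1 x).le) hgint)
      (integrable_mul_bounded continuous_const.aestronglyMeasurable
        (C := ‖lam‖) (fun _ => le_rfl) hgint),
      fourierCoeff.const_mul, fourierCoeff_fourier_mul]
  have coeff_e_zero : ∀ k : ℤ, k ≠ 0 → k ≠ 1 → fourierCoeff e k = 0 := by
    intro k hk0 hk1
    rcases lt_or_ge k 0 with hk | hk
    · rw [coeff_e k, h1 k hk, h1 (k-1) (by omega), mul_zero, sub_zero]
    · have hk2 : 2 ≤ k := by omega
      rw [coeff_e' k, h2 (k-1) (by omega), h2 k (by omega), mul_zero, sub_zero]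
  set c0 := fourierCoeff e 0 with hc0
  set c1 := fourierCoeff e 1 with hc1
  -- e agrees a.e. with the polynomial c0 + c1 z
  have hpolyM : MemLp (fun x : 𝕋 => c0 + c1 * fourier 1 x) 2 μ𝕋 := by
    refine (memLp_top_of_bound ((continuous_const.add (continuous_const.mul
        (map_continuous (fourier 1)))).aestronglyMeasurable) (‖c0‖ + ‖c1‖)
      (Filter.Eventually.of_forall fun x => ?_)).mono_exponent le_top
    calc ‖c0 + c1 * fourier 1 x‖ ≤ ‖c0‖ + ‖c1 * fourier 1 x‖ := norm_add_le _ _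
      _ = ‖c0‖ + ‖c1‖ := by rw [norm_mul, norm_fourier_apply, mul_one]
  have hpolyint : Integrable (fun x : 𝕋 => c0 + c1 * fourier 1 x) μ𝕋 :=
    hpolyM.integrable (by norm_num)
  have coeff_poly : ∀ k : ℤ,
      fourierCoeff (fun x : 𝕋 => c0 + c1 * fourier 1 x) k
        = (if k = 0 then c0 else 0) + (if k = 1 then c1 else 0) := by
    intro k
    rw [fourierCoeff_add (integrable_const c0)
      (integrable_mul_bounded continuous_const.aestronglyMeasurable (C := ‖c1‖)
        (fun _ => le_rfl) (integrable_fourier_smul (integrable_const 1) 1 |>.congr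
          (Filter.Eventually.of_forall fun x => by simp))),
      fourierCoeff_const, fourierCoeff.const_mul]
    congr 1
    rw [fourierCoeff_fourier']
    rcases eq_or_ne k 1 with h | h
    · simp [h]
    · simp [h]
  have hee' : e =ᵐ[μ𝕋] fun x => c0 + c1 * fourier 1 x := by
    have hsub : (fun x => e x - (c0 + c1 * fourier 1 x)) =ᵐ[μ𝕋] 0 := by
      refine memLp2_ae_zero_of_coeffs (heM.sub hpolyM) fun n => ?_
      rw [fourierCoeff_sub heint hpolyint, coeff_poly]
      rcases eq_or_ne n 0 with h | h
      · simp [h, hc0]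
      · rcases eq_or_ne n 1 with h1 | h1
        · simp [h1, hc1]
        · rw [coeff_e_zero n h h1]; simp [h, h1]
    filter_upwards [hsub] with x hx
    exact sub_eq_zero.mp hx
  set Δ : ℂ := 1 - lam * conj lam with hΔdef
  have hΔ : Δ ≠ 0 := one_sub_mul_conj_ne hlam
  refine ⟨(c0 + lam * c1) / Δ, (c1 + conj lam * c0) / Δ, ?_⟩
  set α := (c0 + lam * c1) / Δ with hα
  set β := (c1 + conj lam * c0) / Δ with hβ
  have hαβ1 : α - β * lam = c0 := by
    have key : (c0 + lam * c1) - (c1 + conj lam * c0) * lam = c0 * Δ := by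
      rw [hΔdef]; ring
    rw [hα, hβ, div_mul_eq_mul_div, ← sub_div, key, mul_div_assoc, div_self hΔ, mul_one]
  have hαβ2 : β - conj lam * α = c1 := by
    have key : (c1 + conj lam * c0) - conj lam * (c0 + lam * c1) = c1 * Δ := by
      rw [hΔdef]; ring
    rw [hβ, hα, ← mul_div_assoc, ← sub_div, key, mul_div_assoc, div_self hΔ, mul_one]
  filter_upwards [hee'] with x hx
  have hz := norm_circleCoord x
  have hdenom := denom_ne_zero hlam hz
  apply mul_left_cancel₀ hdenom
  have expand : (1 - conj lam * circleCoord x) * (α + β * blaschke lam (circleCoord x))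
      = (α - β * lam) + (β - conj lam * α) * circleCoord x := by
    have hbd := blaschke_mul_denom hlam hz
    linear_combination β * hbd
  calc (1 - conj lam * circleCoord x) * d x = e x := rfl
    _ = c0 + c1 * fourier 1 x := hx
    _ = (α - β * lam) + (β - conj lam * α) * circleCoord x := by
        rw [hαβ1, hαβ2, circleCoord_def]
    _ = (1 - conj lam * circleCoord x) * (α + β * blaschke lam (circleCoord x)) :=
        expand.symm


theorem mem_orthogonal_span {H : Type*} [NormedAddCommGroup H] [InnerProductSpace ℂ H]
    {s : Set H} {v : H} (h : ∀ u ∈ s, (inner ℂ u v : ℂ) = 0) : v ∈ (span ℂ s)ᗮ := by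
  rw [Submodule.mem_orthogonal]
  intro u hu
  induction hu using Submodule.span_induction with
  | mem x hx => exact h x hx
  | zero => exact inner_zero_left v
  | add x y _ _ hx hy => rw [inner_add_left, hx, hy, add_zero]
  | smul c x _ hx => rw [inner_smul_left, hx, mul_zero]

section Vector
variable {ι : Type} [Fintype ι]

/-- `e_i` with the classical decidability instance (matching `negSpan`). -/
def sing (ι : Type) [Fintype ι] (i : ι) : V ι :=
  @EuclideanSpace.single ι ℂ _ (Classical.decEq ι) i 1

/-- `fourierV` with the classical decidability instance (matching `negSpan`). -/
def fV (ι : Type) [Fintype ι] (k : ℤ) (i : ι) : L2 ι :=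
  @fourierV ι _ (Classical.decEq ι) k i

theorem inner_sing_left (i : ι) (w : V ι) : (inner ℂ (sing ι i) w : ℂ) = w i := by
  letI := Classical.decEq ι
  rw [sing, EuclideanSpace.inner_single_left]
  simp

theorem coord_norm_le (w : V ι) (i : ι) : ‖w i‖ ≤ ‖w‖ := by
  letI := Classical.decEq ι
  rw [← inner_sing_left i w]
  calc ‖(inner ℂ (sing ι i) w : ℂ)‖ ≤ ‖sing ι i‖ * ‖w‖ := norm_inner_le_norm _ _
    _ = ‖w‖ := by rw [sing, EuclideanSpace.norm_single]; simp

theorem fV_coeFn (k : ℤ) (i : ι) :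
    ((fV ι k i : L2 ι) : 𝕋 → V ι) =ᵐ[μ𝕋] fun x => fourier k x • sing ι i := by
  letI := Classical.decEq ι
  exact ContinuousMap.coeFn_toLp (p := 2) (μ := μ𝕋) (𝕜 := ℂ)
    ⟨fun x => fourier k x • sing ι i, (map_continuous (fourier k)).smul continuous_const⟩

theorem inner_fV (k : ℤ) (i : ι) (F : L2 ι) :
    (inner ℂ (fV ι k i) F : ℂ) = fourierCoeff (fun x => (F : 𝕋 → V ι) x i) k := by
  rw [MeasureTheory.L2.inner_def]
  unfold fourierCoeff
  refine integral_congr_ae ?_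
  filter_upwards [fV_coeFn k i] with x hx
  rw [hx, inner_smul_left, inner_sing_left, fourier_neg, smul_eq_mul]

theorem fV_mem_negSpan {k : ℤ} (hk : k < 0) (i : ι) : fV ι k i ∈ negSpan ι :=
  Submodule.subset_span ⟨k, hk, i, rfl⟩

theorem hardy_coeff_zero {f : L2 ι} (hf : f ∈ hardy ι) {k : ℤ} (hk : k < 0) (i : ι) :
    fourierCoeff (fun x => (f : 𝕋 → V ι) x i) k = 0 := by
  rw [← inner_fV]
  exact (Submodule.mem_orthogonal _ _).mp hf _ (fV_mem_negSpan hk i)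

theorem fV_zero_coeFn (j : ι) :
    ((fV ι 0 j : L2 ι) : 𝕋 → V ι) =ᵐ[μ𝕋] fun _ => sing ι j := by
  filter_upwards [fV_coeFn 0 j] with x hx
  rw [hx, fourier_zero, one_smul]

theorem fV_zero_mem_hardy (j : ι) : fV ι 0 j ∈ hardy ι := by
  apply mem_orthogonal_span
  rintro u ⟨k, hk, i, rfl⟩
  rw [show (@fourierV ι _ (Classical.decEq ι) k i : L2 ι) = fV ι k i from rfl, inner_fV]
  have hcoord : (fun x => ((fV ι 0 j : L2 ι) : 𝕋 → V ι) x i)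
      =ᵐ[μ𝕋] fun _ => (sing ι j : V ι) i := by
    filter_upwards [fV_zero_coeFn j] with x hx
    rw [hx]
  rw [fourierCoeff_congr_ae hcoord, fourierCoeff_const]
  simp [ne_of_lt hk]

theorem mulLp_coeFn (Φ : Symbol ι) (f : L2 ι) :
    ((Φ.mulLp f : L2 ι) : 𝕋 → V ι) =ᵐ[μ𝕋] fun x => Φ x ((f : 𝕋 → V ι) x) := by
  unfold Symbol.mulLp
  rw [pointwiseCLM_apply]
  exact MemLp.coeFn_toLp _

/-- The `(i,j)` entry of a symbol applied to a Hardy-type extraction: for `Φ` preserving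
the Hardy space, all negative Fourier coefficients of `x ↦ (Φ x e_j) i` vanish. -/
theorem entry_coeff_zero {Φ : Symbol ι} (hΦ : Φ.MemHinf) (i j : ι) {k : ℤ} (hk : k < 0) :
    fourierCoeff (fun x => (Φ x (sing ι j)) i) k = 0 := by
  have hmem : Φ.mulLp (fV ι 0 j) ∈ hardy ι := hΦ _ (fV_zero_mem_hardy j)
  have h0 := hardy_coeff_zero hmem hk i
  rw [← h0]
  refine fourierCoeff_congr_ae ?_ k
  have h1 := mulLp_coeFn Φ (fV ι 0 j)
  filter_upwards [h1, fV_zero_coeFn (ι := ι) j] with x hx hx0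
  show (Φ x (sing ι j)) i = (((Φ.mulLp (fV ι 0 j) : L2 ι) : 𝕋 → V ι) x) i
  rw [hx, hx0]

end Vector

section Algebra
variable {ι : Type} [Fintype ι]

theorem comp_eq_one_comm {S T : V ι →L[ℂ] V ι} (h : S.comp T = 1) : T.comp S = 1 := by
  apply ContinuousLinearMap.coe_inj.mp
  have hlin : (S : V ι →ₗ[ℂ] V ι) * (T : V ι →ₗ[ℂ] V ι) = 1 := by
    exact congrArg ContinuousLinearMap.toLinearMap h
  have h2 := mul_eq_one_comm.mp hlin
  exact h2

end Algebra

theorem three_point {M : Type*} [AddCommGroup M] [Module ℂ M] {X Y Z : M} {v0 v1 v2 : ℂ}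
    (hv0 : conj v0 * v0 = 1) (hv1 : conj v1 * v1 = 1) (hv2 : conj v2 * v2 = 1)
    (h01 : v0 ≠ v1) (h02 : v0 ≠ v2) (h12 : v1 ≠ v2)
    (e0 : v0 • X + conj v0 • Y = Z) (e1 : v1 • X + conj v1 • Y = Z)
    (e2 : v2 • X + conj v2 • Y = Z) : X = 0 ∧ Y = 0 ∧ Z = 0 := by
  have hv0' : v0 ≠ 0 := by rintro rfl; rw [mul_zero] at hv0; exact one_ne_zero hv0.symm
  have key : ∀ va vb : ℂ, conj va * va = 1 → conj vb * vb = 1 → va ≠ vb →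
      (va • X + conj va • Y = Z) → (vb • X + conj vb • Y = Z) → (va * vb) • X = Y := by
    intro va vb ha hb hab ea eb
    have hsub : (va - vb) • X + (conj va - conj vb) • Y = 0 := by
      rw [sub_smul, sub_smul]
      have h := sub_eq_zero.mpr (ea.trans eb.symm)
      calc va • X - vb • X + (conj va • Y - conj vb • Y)
          = va • X + conj va • Y - (vb • X + conj vb • Y) := by abel
        _ = 0 := h
    have hsmul := congrArg (fun m => (va * vb) • m) hsub
    simp only [smul_add, smul_smul, smul_zero] at hsmul
    have hc : va * vb * (conj va - conj vb) = -(va - vb) := by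
      have h1 : va * conj va = 1 := by rw [mul_comm]; exact ha
      have h2 : vb * conj vb = 1 := by rw [mul_comm]; exact hb
      calc va * vb * (conj va - conj vb) = (va * conj va) * vb - (vb * conj vb) * va := by ring
        _ = vb - va := by rw [h1, h2, one_mul, one_mul]
        _ = -(va - vb) := by ring
    rw [hc] at hsmul
    have h4 : (va - vb) • ((va * vb) • X - Y) = 0 := by
      rw [smul_sub, smul_smul]
      calc ((va - vb) * (va * vb)) • X - (va - vb) • Y
          = (va * vb * (va - vb)) • X + -(va - vb) • Y := by
            rw [sub_eq_add_neg, ← neg_smul, mul_comm (va - vb) (va * vb)]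
        _ = 0 := hsmul
    rcases smul_eq_zero.mp h4 with h | h
    · exact absurd (sub_eq_zero.mp h) hab
    · exact sub_eq_zero.mp h
  have k01 := key v0 v1 hv0 hv1 h01 e0 e1
  have k02 := key v0 v2 hv0 hv2 h02 e0 e2
  have hX0 : (v0 * v1 - v0 * v2) • X = 0 := by rw [sub_smul, k01, k02, sub_self]
  have hcoeff : v0 * v1 - v0 * v2 ≠ 0 := by
    intro h
    have : v0 * (v1 - v2) = 0 := by linear_combination h
    rcases mul_eq_zero.mp this with h' | h'
    · exact hv0' h'
    · exact h12 (sub_eq_zero.mp h')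
  have hX : X = 0 := by
    rcases smul_eq_zero.mp hX0 with h | h
    · exact absurd h hcoeff
    · exact h
  have hY : Y = 0 := by rw [← k01, hX, smul_zero]
  refine ⟨hX, hY, ?_⟩
  rw [← e0, hX, hY, smul_zero, smul_zero, add_zero]

section Matrices
variable {ι : Type} [Fintype ι]

/-- The constant operator with matrix entries `c i j` (rows `i`, columns `j`). -/
def mkCLM (c : ι → ι → ℂ) : V ι →L[ℂ] V ι :=
  ∑ j, (innerSL ℂ (sing ι j)).smulRight (∑ i, c i j • sing ι i)

theorem sing_coord_self (i : ι) : (sing ι i : V ι) i = 1 := by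
  letI := Classical.decEq ι
  rw [sing, EuclideanSpace.single_apply, if_pos rfl]

theorem sing_coord_ne {i i' : ι} (h : i' ≠ i) : (sing ι i : V ι) i' = 0 := by
  letI := Classical.decEq ι
  rw [sing, EuclideanSpace.single_apply, if_neg h]

theorem col_coord (c : ι → ι → ℂ) (j : ι) (i : ι) :
    ((∑ i', c i' j • sing ι i' : V ι)) i = c i j := by
  rw [← inner_sing_left i (∑ i', c i' j • sing ι i' : V ι), inner_sum]
  simp_rw [inner_smul_right, inner_sing_left]
  rw [Finset.sum_eq_single i
    (fun b _ hb => by rw [sing_coord_ne (Ne.symm hb), mul_zero])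
    (fun h => absurd (Finset.mem_univ i) h)]
  rw [sing_coord_self, mul_one]

theorem mkCLM_entry (c : ι → ι → ℂ) (i j : ι) : (mkCLM c (sing ι j)) i = c i j := by
  rw [mkCLM, ContinuousLinearMap.sum_apply,
    ← inner_sing_left i (∑ j', ((innerSL ℂ (sing ι j')).smulRight
      (∑ i', c i' j' • sing ι i')) (sing ι j)), inner_sum]
  have hterm : ∀ j' : ι, (inner ℂ (sing ι i)
        (((innerSL ℂ (sing ι j')).smulRight (∑ i', c i' j' • sing ι i')) (sing ι j)) : ℂ)
      = (sing ι j : V ι) j' * c i j' := by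
    intro j'
    rw [ContinuousLinearMap.smulRight_apply, innerSL_apply_apply, inner_smul_right, inner_sing_left,
      inner_sing_left, col_coord]
  rw [Finset.sum_congr rfl fun j' _ => hterm j']
  rw [Finset.sum_eq_single j
    (fun b _ hb => by rw [sing_coord_ne hb, zero_mul])
    (fun h => absurd (Finset.mem_univ j) h)]
  rw [sing_coord_self, one_mul]

theorem clm_ext_entries {S T : V ι →L[ℂ] V ι}
    (h : ∀ i j, (S (sing ι j)) i = (T (sing ι j)) i) : S = T := by
  letI := Classical.decEq ι
  apply ContinuousLinearMap.coe_inj.mp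
  apply Module.Basis.ext (EuclideanSpace.basisFun ι ℂ).toBasis
  intro j
  rw [OrthonormalBasis.coe_toBasis, EuclideanSpace.basisFun_apply]
  exact PiLp.ext fun i => h i j

end Matrices

theorem conj_mul_self_one {z : ℂ} (h : ‖z‖ = 1) : conj z * z = 1 := by
  rw [Complex.conj_mul']
  norm_cast
  rw [h]
  norm_num

theorem statement7' (ι : Type) [Fintype ι] (lam : ℂ) (hlam : ‖lam‖ < 1)
    (D E : Symbol ι) (hD : D.IsInner) (hE : E.MemHinf)
    (hdiv : ∀ᵐ x ∂μ𝕋,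
      (blaschke lam (circleCoord x)) • (1 : V ι →L[ℂ] V ι)
        = (E.toFun x).comp (D.toFun x)) :
    ∃ ν : V ι →L[ℂ] V ι, ν ∈ unitary (V ι →L[ℂ] V ι) ∧
      ∃ P : V ι →L[ℂ] V ι, IsSelfAdjoint P ∧ P.comp P = P ∧
        ∀ᵐ x ∂μ𝕋,
          D.toFun x = ν.comp ((blaschke lam (circleCoord x)) • P + (1 - P)) := by
  letI := Classical.decEq ι
  obtain ⟨hDH, hDunit⟩ := hD
  set b : 𝕋 → ℂ := fun x => blaschke lam (circleCoord x) with hbdef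
  have hbc : Continuous b := continuous_bc hlam
  have hbnorm : ∀ x, ‖b x‖ = 1 := fun x => norm_blaschke hlam (norm_circleCoord x)
  -- E = b • D* a.e.
  have hDright : ∀ᵐ x ∂μ𝕋,
      (D.toFun x).comp (ContinuousLinearMap.adjoint (D.toFun x)) = 1 :=
    hDunit.mono fun x hx => comp_eq_one_comm hx
  have hE_eq : ∀ᵐ x ∂μ𝕋,
      E.toFun x = b x • ContinuousLinearMap.adjoint (D.toFun x) := by
    filter_upwards [hdiv, hDright] with x h1 h2
    calc E.toFun x = (E.toFun x).comp 1 := (ContinuousLinearMap.comp_id _).symm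
      _ = (E.toFun x).comp ((D.toFun x).comp (ContinuousLinearMap.adjoint (D.toFun x))) := by
          rw [h2]
      _ = ((E.toFun x).comp (D.toFun x)).comp (ContinuousLinearMap.adjoint (D.toFun x)) := by
          rw [ContinuousLinearMap.comp_assoc]
      _ = (b x • (1 : V ι →L[ℂ] V ι)).comp (ContinuousLinearMap.adjoint (D.toFun x)) := by
          rw [← h1]
      _ = b x • ContinuousLinearMap.adjoint (D.toFun x) := by
          rw [ContinuousLinearMap.smul_comp,
            show (1 : V ι →L[ℂ] V ι).comp (ContinuousLinearMap.adjoint (D.toFun x))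
              = ContinuousLinearMap.adjoint (D.toFun x) from one_mul _]
  -- matrix entries of D
  set dm : ι → ι → 𝕋 → ℂ := fun i j x => (D.toFun x (sing ι j)) i with hdm
  have hdmM : ∀ i j, MemLp (dm i j) 2 μ𝕋 := by
    intro i j
    have hcont : Continuous fun T : V ι →L[ℂ] V ι => (T (sing ι j)) i := by
      have h1 : Continuous fun T : V ι →L[ℂ] V ι => T (sing ι j) :=
        (ContinuousLinearMap.apply ℂ (V ι) (sing ι j)).continuous
      have h2 : Continuous fun w : V ι => w i := by
        have : (fun w : V ι => w i) = fun w => (inner ℂ (sing ι i) w : ℂ) :=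
          funext fun w => (inner_sing_left i w).symm
        rw [this]
        exact (innerSL ℂ (sing ι i)).continuous
      exact h2.comp h1
    refine (memLp_top_of_bound (hcont.comp_aestronglyMeasurable D.meas) D.bound
      (Filter.Eventually.of_forall fun x => ?_)).mono_exponent le_top
    calc ‖(D.toFun x (sing ι j)) i‖ ≤ ‖D.toFun x (sing ι j)‖ := coord_norm_le _ i
      _ ≤ ‖D.toFun x‖ * ‖sing ι j‖ := ContinuousLinearMap.le_opNorm _ _
      _ ≤ D.bound * 1 := by
          refine mul_le_mul (D.le_bound x) ?_ (norm_nonneg _)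
            (le_trans (norm_nonneg _) (D.le_bound x))
          rw [sing, EuclideanSpace.norm_single]
          simp
      _ = D.bound := mul_one _
  have h1 : ∀ i j, ∀ k : ℤ, k < 0 → fourierCoeff (dm i j) k = 0 :=
    fun i j k hk => entry_coeff_zero hDH i j hk
  -- negative coefficients for entries of E
  have hEent : ∀ i j, ∀ k : ℤ, k < 0 →
      fourierCoeff (fun x => (E.toFun x (sing ι i)) j) k = 0 :=
    fun i j k hk => entry_coeff_zero hE j i hk
  have h2 : ∀ i j, ∀ m : ℤ, 1 ≤ m →
      fourierCoeff (fun x => conj (b x) * dm i j x) m = 0 := by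
    intro i j m hm
    have e1 : (fun x => (E.toFun x (sing ι i)) j) =ᵐ[μ𝕋]
        fun x => b x * conj (dm i j x) := by
      filter_upwards [hE_eq] with x hx
      have hadjcoord : (ContinuousLinearMap.adjoint (D.toFun x) (sing ι i)) j
          = conj (dm i j x) := by
        rw [← inner_sing_left j (ContinuousLinearMap.adjoint (D.toFun x) (sing ι i)),
          ContinuousLinearMap.adjoint_inner_right,
          ← inner_conj_symm, inner_sing_left]
      show (E.toFun x (sing ι i)) j = b x * conj (dm i j x)
      rw [hx]
      show (b x • ContinuousLinearMap.adjoint (D.toFun x) (sing ι i)) j = _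
      rw [← hadjcoord]
      simp
    have e2 : fourierCoeff (fun x => b x * conj (dm i j x)) (-m) = 0 := by
      rw [← fourierCoeff_congr_ae e1]
      exact hEent i j (-m) (by omega)
    have e3 : (fun x => conj (b x) * dm i j x)
        = fun x => conj (b x * conj (dm i j x)) := by
      funext x
      rw [map_mul, Complex.conj_conj]
    rw [e3, fourierCoeff_conj, e2, map_zero]
  -- per-entry affine representation
  have key : ∀ i j, ∃ α β : ℂ, ∀ᵐ x ∂μ𝕋, dm i j x = α + β * b x :=
    fun i j => scalar_step lam hlam (hdmM i j) (h1 i j) (h2 i j)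
  choose αm βm hab using key
  set A : V ι →L[ℂ] V ι := mkCLM αm with hA
  set B : V ι →L[ℂ] V ι := mkCLM βm with hB
  have hDAB : ∀ᵐ x ∂μ𝕋, D.toFun x = A + b x • B := by
    have hall : ∀ᵐ x ∂μ𝕋, ∀ i j, dm i j x = αm i j + βm i j * b x :=
      ae_all_iff.2 fun i => ae_all_iff.2 fun j => hab i j
    filter_upwards [hall] with x hx
    refine clm_ext_entries fun i j => ?_
    have hrhs : ((A + b x • B) (sing ι j)) i = αm i j + b x * βm i j := by
      rw [ContinuousLinearMap.add_apply, ContinuousLinearMap.smul_apply]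
      show (A (sing ι j)) i + (b x • B (sing ι j)) i = _
      rw [hA, hB, show (b x • (mkCLM βm) (sing ι j)) i
        = b x * ((mkCLM βm) (sing ι j)) i from by simp, mkCLM_entry, mkCLM_entry]
    rw [hrhs]
    rw [show (D.toFun x (sing ι j)) i = dm i j x from rfl, hx i j]
    ring
  -- unitarity for all x by continuity
  have hunit_all : ∀ x : 𝕋,
      (ContinuousLinearMap.adjoint (A + b x • B)).comp (A + b x • B) = 1 := by
    have hcont : Continuous fun x : 𝕋 =>
        (ContinuousLinearMap.adjoint (A + b x • B)).comp (A + b x • B) := by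
      have hin : Continuous fun x : 𝕋 => A + b x • B :=
        continuous_const.add (hbc.smul continuous_const)
      exact (((ContinuousLinearMap.adjoint (E := V ι) (F := V ι)).continuous.comp
        hin)).clm_comp hin
    have hae : (fun x : 𝕋 => (ContinuousLinearMap.adjoint (A + b x • B)).comp (A + b x • B))
        =ᵐ[μ𝕋] fun _ => 1 := by
      filter_upwards [hDAB, hDunit] with x hx1 hx2
      rw [← hx1]
      exact hx2
    have := (Continuous.ae_eq_iff_eq μ𝕋 hcont continuous_const).mp hae
    intro x
    exact congrFun this x
  -- expansion
  set Aa := ContinuousLinearMap.adjoint A with hAa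
  set Ba := ContinuousLinearMap.adjoint B with hBa
  set X := Aa.comp B with hX
  set Y := Ba.comp A with hY
  set S := Aa.comp A + Ba.comp B with hS
  have hexp : ∀ w : ℂ, conj w * w = 1 →
      (ContinuousLinearMap.adjoint (A + w • B)).comp (A + w • B)
        = w • X + conj w • Y + S := by
    intro w hw
    have hw' : w * conj w = 1 := by rw [mul_comm]; exact hw
    rw [map_add, map_smulₛₗ]
    show (Aa + conj w • Ba).comp (A + w • B) = _
    simp only [ContinuousLinearMap.add_comp, ContinuousLinearMap.comp_add,
      ContinuousLinearMap.smul_comp, ContinuousLinearMap.comp_smul, smul_add, smul_smul,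
      hw, hw', one_smul]
    rw [hX, hY, hS]
    abel
  -- evaluate at three points
  have hcirc : ∀ r : ℝ, circleCoord ((r : ℝ) : 𝕋) = Complex.exp (r * Complex.I) := by
    intro r
    show fourier 1 ((r : ℝ) : 𝕋) = _
    rw [fourier_coe_apply]
    congr 1
    have : (π : ℂ) ≠ 0 := by exact_mod_cast Real.pi_ne_zero
    field_simp
    push_cast
    ring
  have hc0 : circleCoord ((0 : ℝ) : 𝕋) = 1 := by
    rw [hcirc]; simp
  have hc1 : circleCoord ((π : ℝ) : 𝕋) = -1 := by
    rw [hcirc]; exact_mod_cast Complex.exp_pi_mul_I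
  have hc2 : circleCoord ((π/2 : ℝ) : 𝕋) = Complex.I := by
    rw [hcirc]
    simp [Complex.exp_mul_I, ← Complex.ofReal_cos, ← Complex.ofReal_sin]
  set v0 := blaschke lam 1 with hv0def
  set v1 := blaschke lam (-1) with hv1def
  set v2 := blaschke lam Complex.I with hv2def
  have hn1 : ‖(1:ℂ)‖ = 1 := norm_one
  have hn2 : ‖(-1:ℂ)‖ = 1 := by rw [norm_neg, norm_one]
  have hn3 : ‖Complex.I‖ = 1 := Complex.norm_I
  have hvn0 : conj v0 * v0 = 1 := conj_mul_self_one (norm_blaschke hlam hn1)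
  have hvn1 : conj v1 * v1 = 1 := conj_mul_self_one (norm_blaschke hlam hn2)
  have hvn2 : conj v2 * v2 = 1 := conj_mul_self_one (norm_blaschke hlam hn3)
  have hd01 : v0 ≠ v1 := by
    intro h
    have h2 := blaschke_inj hlam hn1 hn2 h
    norm_num [Complex.ext_iff] at h2
  have hd02 : v0 ≠ v2 := by
    intro h
    have h2 := blaschke_inj hlam hn1 hn3 h
    norm_num [Complex.ext_iff] at h2
  have hd12 : v1 ≠ v2 := by
    intro h
    have h2 := blaschke_inj hlam hn2 hn3 h
    norm_num [Complex.ext_iff] at h2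
  have mkeq : ∀ (r : ℝ), b ((r : ℝ) : 𝕋) • X + conj (b ((r : ℝ) : 𝕋)) • Y = 1 - S := by
    intro r
    have h := hunit_all ((r : ℝ) : 𝕋)
    rw [hexp _ (conj_mul_self_one (hbnorm _))] at h
    rw [← h]
    abel
  have e0 : v0 • X + conj v0 • Y = 1 - S := by
    have := mkeq 0
    rwa [show b ((0:ℝ) : 𝕋) = v0 from by rw [hbdef]; simp only []; rw [hc0]] at this
  have e1 : v1 • X + conj v1 • Y = 1 - S := by
    have := mkeq π
    rwa [show b ((π:ℝ) : 𝕋) = v1 from by rw [hbdef]; simp only []; rw [hc1]] at this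
  have e2 : v2 • X + conj v2 • Y = 1 - S := by
    have := mkeq (π/2)
    rwa [show b ((π/2:ℝ) : 𝕋) = v2 from by rw [hbdef]; simp only []; rw [hc2]] at this
  obtain ⟨hX0, hY0, hZ0⟩ := three_point hvn0 hvn1 hvn2 hd01 hd02 hd12 e0 e1 e2
  have hS1 : S = 1 := ((sub_eq_zero.mp hZ0).symm)
  -- the unitary and the projection
  set ν := A + B with hν
  have hνadj : ContinuousLinearMap.adjoint ν = Aa + Ba := by
    rw [hν, map_add]
  have hν'ν : (ContinuousLinearMap.adjoint ν).comp ν = 1 := by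
    have h := hexp 1 (by norm_num)
    rw [one_smul] at h
    rw [show A + B = ν from rfl] at h
    rw [h, hX0, hY0, hS1]
    simp
  have hνν' : ν.comp (ContinuousLinearMap.adjoint ν) = 1 := comp_eq_one_comm hν'ν
  set P := Ba.comp B with hP
  have hPadj : ContinuousLinearMap.adjoint P = P := by
    rw [hP, ContinuousLinearMap.adjoint_comp, hBa, ContinuousLinearMap.adjoint_adjoint]
  have hPsa : IsSelfAdjoint P := by
    show star P = P
    rw [ContinuousLinearMap.star_eq_adjoint]
    exact hPadj
  have hν'B : (ContinuousLinearMap.adjoint ν).comp B = P := by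
    rw [hνadj, ContinuousLinearMap.add_comp, ← hX, ← hP, hX0, zero_add]
  have hνP : ν.comp P = B := by
    rw [← hν'B, ← ContinuousLinearMap.comp_assoc, hνν',
      show (1 : V ι →L[ℂ] V ι).comp B = B from one_mul _]
  have hPP : P.comp P = P := by
    calc P.comp P
        = (ContinuousLinearMap.adjoint ((ContinuousLinearMap.adjoint ν).comp B)).comp
            ((ContinuousLinearMap.adjoint ν).comp B) := by rw [hν'B, hPadj]
      _ = ((ContinuousLinearMap.adjoint B).comp ν).comp
            ((ContinuousLinearMap.adjoint ν).comp B) := by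
          rw [ContinuousLinearMap.adjoint_comp, ContinuousLinearMap.adjoint_adjoint]
      _ = (ContinuousLinearMap.adjoint B).comp
            ((ν.comp (ContinuousLinearMap.adjoint ν)).comp B) := by
          rw [ContinuousLinearMap.comp_assoc, ContinuousLinearMap.comp_assoc]
      _ = (ContinuousLinearMap.adjoint B).comp B := by
          rw [hνν', show (1 : V ι →L[ℂ] V ι).comp B = B from one_mul _]
      _ = P := by rw [← hBa, ← hP]
  refine ⟨ν, ?_, P, hPsa, hPP, ?_⟩
  · rw [Unitary.mem_iff]
    constructor
    · show star ν * ν = 1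
      rw [ContinuousLinearMap.star_eq_adjoint]
      exact hν'ν
    · show ν * star ν = 1
      rw [ContinuousLinearMap.star_eq_adjoint]
      exact hνν'
  · filter_upwards [hDAB] with x hx
    rw [show blaschke lam (circleCoord x) = b x from rfl, hx]
    have hexpand : ν.comp (b x • P + (1 - P)) = b x • (ν * P) + (ν * 1 - ν * P) := by
      show ν * (b x • P + (1 - P)) = _
      rw [mul_add, mul_sub, mul_smul_comm]
    rw [hexpand, show ν * P = B from hνP, mul_one, hν]
    abel

/-- Lemma 2.3. Every inner divisor of `B_λ := b_λ I_n` is a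
Blaschke–Potapov factor `ν (b_λ P + (I - P))` with `ν` a constant unitary and `P` an
orthogonal projection. -/
theorem statement7 (ι : Type) [Fintype ι] (lam : ℂ) (hlam : ‖lam‖ < 1)
    (D E : Symbol ι) (hD : D.IsInner) (hE : E.MemHinf)
    (hdiv : ∀ᵐ x ∂μ𝕋,
      (blaschke lam (circleCoord x)) • (1 : V ι →L[ℂ] V ι)
        = (E.toFun x).comp (D.toFun x)) :
    ∃ ν : V ι →L[ℂ] V ι, ν ∈ unitary (V ι →L[ℂ] V ι) ∧
      ∃ P : V ι →L[ℂ] V ι, IsSelfAdjoint P ∧ P.comp P = P ∧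
        ∀ᵐ x ∂μ𝕋,
          D.toFun x = ν.comp ((blaschke lam (circleCoord x)) • P + (1 - P)) :=
  statement7' ι lam hlam D E hD hE hdiv

end BlockToeplitz
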